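/- Let g(x) = 1/(ε + ‖x‖^α) on ℝ² with ε > 0 and α > 2. Then g is integrable and square-integrable on ℝ², and the spatio-temporal correlation coefficient for an ALOHA ad hoc network with p = 1, ζ(v) = (∫_{ℝ²} g(x) g(x − v) dx) / (E[h²] ∫_{ℝ²} g(x)² dx), satisfies ζ(0) = 1/E[h²], 0 < ζ(v) ≤ 1/E[h²] for all v, and ζ(v) → 0 as ‖v‖ → ∞. -/

import Mathlib

open MeasureTheory Real Filter Topology

/-- For `g x = 1/(ε + ‖x‖^α)` with `ε > 0`, `α > 2`: `g` and `g²` are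
integrable on the plane, and the ad hoc (ALOHA, `p = 1`) spatio-temporal
interference correlation coefficient
`ζ(v) = (∫ g(x) g(x−v) dx)/(E[h²] ∫ g(x)² dx)` satisfies `ζ 0 = 1/E[h²]`,
`0 < ζ v ≤ 1/E[h²]` for all `v`, and `ζ v → 0` as `‖v‖ → ∞`. -/
theorem stmt_15 (ε α Eh2 : ℝ) (hε : 0 < ε) (hα : 2 < α) (hEh2 : 1 ≤ Eh2)
    (g : EuclideanSpace ℝ (Fin 2) → ℝ)
    (hg : ∀ x, g x = 1 / (ε + ‖x‖ ^ α))
    (ζ : EuclideanSpace ℝ (Fin 2) → ℝ)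
    (hζ : ∀ v, ζ v = (∫ x, g x * g (x - v)) / (Eh2 * ∫ x, (g x) ^ 2)) :
    Integrable g volume ∧ Integrable (fun x => (g x) ^ 2) volume ∧
    ζ 0 = 1 / Eh2 ∧
    (∀ v, 0 < ζ v ∧ ζ v ≤ 1 / Eh2) ∧
    Tendsto ζ (Filter.comap norm Filter.atTop) (nhds 0) := by
  have hα0 : (0:ℝ) < α := by linarith
  have hEh2pos : (0:ℝ) < Eh2 := by linarith
  have hden : ∀ x : EuclideanSpace ℝ (Fin 2), 0 < ε + ‖x‖ ^ α := fun x =>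
    add_pos_of_pos_of_nonneg hε (Real.rpow_nonneg (norm_nonneg x) α)
  have hgpos : ∀ x, 0 < g x := fun x => by
    rw [hg]; exact div_pos one_pos (hden x)
  have hgle : ∀ x, g x ≤ 1 / ε := fun x => by
    rw [hg]
    exact one_div_le_one_div_of_le hε (by linarith [Real.rpow_nonneg (norm_nonneg x) α])
  have hgcont : Continuous g := by
    have : g = fun x => 1 / (ε + ‖x‖ ^ α) := funext hg
    rw [this]
    exact continuous_const.div
      (continuous_const.add (continuous_norm.rpow_const fun x => Or.inr hα0.le))
      (fun x => (hden x).ne')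
  -- key pointwise bound for integrability
  have hm : (0:ℝ) < min ε 1 := lt_min hε one_pos
  have hT : (0:ℝ) < (2:ℝ) ^ α := Real.rpow_pos_of_pos two_pos α
  have key : ∀ x : EuclideanSpace ℝ (Fin 2),
      ‖g x‖ ≤ ((2:ℝ) ^ α / min ε 1) * (1 + ‖x‖) ^ (-α) := by
    intro x
    have hA : (0:ℝ) < (1 + ‖x‖) ^ α := Real.rpow_pos_of_pos (by positivity) α
    have h1 : (1 + ‖x‖) ^ α ≤ (2:ℝ) ^ α * (1 + ‖x‖ ^ α) := by
      have hmax : (1 + ‖x‖) ≤ 2 * max 1 ‖x‖ := by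
        rcases le_total ‖x‖ 1 with h | h
        · have := le_max_left (1:ℝ) ‖x‖; linarith
        · have := le_max_right (1:ℝ) ‖x‖; linarith
      calc (1 + ‖x‖) ^ α ≤ (2 * max 1 ‖x‖) ^ α :=
            Real.rpow_le_rpow (by positivity) hmax hα0.le
        _ = (2:ℝ) ^ α * (max 1 ‖x‖) ^ α := Real.mul_rpow (by norm_num) (by positivity)
        _ ≤ (2:ℝ) ^ α * (1 + ‖x‖ ^ α) := by
            apply mul_le_mul_of_nonneg_left _ hT.le
            rcases le_total ‖x‖ 1 with h | h
            · rw [max_eq_left h, Real.one_rpow]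
              linarith [Real.rpow_nonneg (norm_nonneg x) α]
            · rw [max_eq_right h]; linarith
    have hkey : min ε 1 / (2:ℝ) ^ α * (1 + ‖x‖) ^ α ≤ ε + ‖x‖ ^ α := by
      rw [div_mul_eq_mul_div, div_le_iff₀ hT]
      have hm1 : min ε 1 ≤ ε := min_le_left _ _
      have hm2 : min ε 1 ≤ 1 := min_le_right _ _
      have hB : (0:ℝ) ≤ ‖x‖ ^ α := Real.rpow_nonneg (norm_nonneg x) α
      nlinarith [mul_le_mul_of_nonneg_left h1 hm.le,
        mul_le_mul_of_nonneg_left (mul_le_mul_of_nonneg_right hm2 hB) hT.le,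
        mul_le_mul_of_nonneg_left hm1 hT.le]
    rw [Real.norm_of_nonneg (hgpos x).le, hg, Real.rpow_neg (by positivity), one_div]
    calc (ε + ‖x‖ ^ α)⁻¹ ≤ (min ε 1 / (2:ℝ) ^ α * (1 + ‖x‖) ^ α)⁻¹ := by
          apply inv_anti₀ (by positivity) hkey
      _ = ((2:ℝ) ^ α / min ε 1) * ((1 + ‖x‖) ^ α)⁻¹ := by
          rw [mul_inv, inv_div]
  have hbase : Integrable (fun x : EuclideanSpace ℝ (Fin 2) => (1 + ‖x‖) ^ (-α)) volume := by
    apply integrable_one_add_norm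
    rw [finrank_euclideanSpace_fin]
    exact_mod_cast hα
  have I1 : Integrable g volume :=
    (hbase.const_mul ((2:ℝ) ^ α / min ε 1)).mono' hgcont.aestronglyMeasurable
      (ae_of_all _ key)
  have I2 : Integrable (fun x => (g x) ^ 2) volume := by
    apply (I1.const_mul (1/ε)).mono' (hgcont.pow 2).aestronglyMeasurable
    apply ae_of_all
    intro x
    rw [Pi.pow_apply, Real.norm_of_nonneg (sq_nonneg _), sq]
    exact mul_le_mul_of_nonneg_right (hgle x) (hgpos x).le
  have I2pos : 0 < ∫ x, (g x) ^ 2 := by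
    rw [integral_pos_iff_support_of_nonneg (fun x => sq_nonneg (g x)) I2]
    have : Function.support (fun x => (g x) ^ 2) = Set.univ :=
      Set.eq_univ_of_forall fun x => (pow_pos (hgpos x) 2).ne'
    rw [this]
    exact isOpen_univ.measure_pos volume Set.univ_nonempty
  have hmeas : ∀ v : EuclideanSpace ℝ (Fin 2),
      Continuous (fun x => g x * g (x - v)) := fun v =>
    hgcont.mul (hgcont.comp (continuous_sub_right v))
  have hprod : ∀ v, Integrable (fun x => g x * g (x - v)) volume := by
    intro v
    apply (I1.mul_const (1/ε)).mono' (hmeas v).aestronglyMeasurable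
    apply ae_of_all
    intro x
    rw [Real.norm_of_nonneg (mul_nonneg (hgpos x).le (hgpos _).le)]
    exact mul_le_mul_of_nonneg_left (hgle _) (hgpos x).le
  have Nle : ∀ v, (∫ x, g x * g (x - v)) ≤ ∫ x, (g x) ^ 2 := by
    intro v
    have hIv2 : Integrable (fun x => g (x - v) ^ 2) volume := I2.comp_sub_right v
    have hsum : Integrable (fun x => ((g x) ^ 2 + g (x - v) ^ 2) / 2) volume :=
      (I2.add hIv2).div_const 2
    have hmono := integral_mono (hprod v) hsum
      (fun x => by nlinarith [sq_nonneg (g x - g (x - v))])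
    rw [integral_div, integral_add I2 hIv2,
      integral_sub_right_eq_self (fun x => (g x) ^ 2) v] at hmono
    linarith
  have Npos : ∀ v, 0 < ∫ x, g x * g (x - v) := by
    intro v
    rw [integral_pos_iff_support_of_nonneg
      (fun x => mul_nonneg (hgpos x).le (hgpos _).le) (hprod v)]
    have : Function.support (fun x => g x * g (x - v)) = Set.univ :=
      Set.eq_univ_of_forall fun x => (mul_pos (hgpos x) (hgpos _)).ne'
    rw [this]
    exact isOpen_univ.measure_pos volume Set.univ_nonempty
  have hfrac : (∫ x, (g x) ^ 2) / (Eh2 * ∫ x, (g x) ^ 2) = 1 / Eh2 := by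
    rw [mul_comm, ← div_div, div_self I2pos.ne']
  refine ⟨I1, I2, ?_, ?_, ?_⟩
  · rw [hζ 0]
    have : (∫ x, g x * g (x - 0)) = ∫ x, (g x) ^ 2 := by
      congr 1; funext x; rw [sub_zero, sq]
    rw [this, hfrac]
  · intro v
    rw [hζ v]
    constructor
    · exact div_pos (Npos v) (mul_pos hEh2pos I2pos)
    · rw [← hfrac]
      exact div_le_div_of_nonneg_right (Nle v) (mul_pos hEh2pos I2pos).le |>.trans le_rfl
  · have hl : Tendsto (fun v => ∫ x, g x * g (x - v))
        (Filter.comap norm Filter.atTop) (nhds 0) := by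
      rw [show (0:ℝ) = ∫ _x : EuclideanSpace ℝ (Fin 2), (0:ℝ) by simp]
      apply tendsto_integral_filter_of_dominated_convergence (fun x => g x * (1/ε))
      · exact Filter.Eventually.of_forall fun v => (hmeas v).aestronglyMeasurable
      · apply Filter.Eventually.of_forall
        intro v
        apply ae_of_all
        intro x
        rw [Real.norm_of_nonneg (mul_nonneg (hgpos x).le (hgpos _).le)]
        exact mul_le_mul_of_nonneg_left (hgle _) (hgpos x).le
      · exact I1.mul_const (1/ε)
      · apply ae_of_all
        intro x
        have h1 : Tendsto (fun v : EuclideanSpace ℝ (Fin 2) => ‖x - v‖)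
            (Filter.comap norm Filter.atTop) atTop := by
          apply tendsto_atTop_mono (fun v => ?_)
            (tendsto_atTop_add_const_right _ (-‖x‖) tendsto_comap)
          rw [norm_sub_rev]
          have := norm_sub_norm_le v x
          linarith
        have h2 : Tendsto (fun v : EuclideanSpace ℝ (Fin 2) => ε + ‖x - v‖ ^ α)
            (Filter.comap norm Filter.atTop) atTop :=
          tendsto_atTop_add_const_left _ ε ((tendsto_rpow_atTop hα0).comp h1)
        have h3 : Tendsto (fun v : EuclideanSpace ℝ (Fin 2) => g (x - v))
            (Filter.comap norm Filter.atTop) (nhds 0) := by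
          simp only [hg, one_div]
          exact h2.inv_tendsto_atTop
        simpa using h3.const_mul (g x)
    have : ζ = fun v => (∫ x, g x * g (x - v)) / (Eh2 * ∫ x, (g x) ^ 2) := funext hζ
    rw [this]
    simpa using hl.div_const (Eh2 * ∫ x, (g x) ^ 2)
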